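/- The sequence d_a defined by the recursion d_a(x+rn) = 0 for x+rn < a+n, d_a(a+n) = 1, and d_a(x+rn) = Σ_{α: x→t(α) in Q} d_a(t(α)+rn) + Σ_{β: s(β)→x in Q} d_a(s(β)+(r-1)n) − d_a(x+(r-1)n) for x+rn > a+n, takes only non-negative values whenever Q satisfies condition (b). -/
import Mathlib


/-! Combinatorics of quivers: walks in the double quiver, the function `l_Q`,
paths, acyclicity, condition (b), unique sources, and the set `L(Q)`.
A quiver on a vertex type `V` is encoded by its family of arrow types
`H : V → V → Type`. -/

/-- Walks in the double quiver `Q̃` of the quiver `Q` encoded by `H`: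
a step may traverse an arrow forwards (`fwd`) or backwards (`bwd`). -/
inductive DWalk {V : Type} (H : V → V → Type) : V → V → Type where
  | nil : (a : V) → DWalk H a a
  | fwd : {a b c : V} → DWalk H a b → H b c → DWalk H a c
  | bwd : {a b c : V} → DWalk H a b → H c b → DWalk H a c

/-- `c⁺(w)`: the number of forward (original) arrows used by a walk in `Q̃`. -/
def DWalk.cplus {V : Type} {H : V → V → Type} : {a b : V} → DWalk H a b → ℕ
  | _, _, .nil _ => 0
  | _, _, .fwd w _ => DWalk.cplus w + 1
  | _, _, .bwd w _ => DWalk.cplus w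

/-- `l_Q(i,j)`: the minimal number of forward arrows over all walks from `i`
to `j` in the double quiver `Q̃`.  (In particular `l_Q(i,i) = 0`.) -/
noncomputable def ell {V : Type} (H : V → V → Type) (i j : V) : ℕ :=
  sInf {m | ∃ w : DWalk H i j, DWalk.cplus w = m}

/-- Directed paths in the quiver `Q` itself. -/
inductive QPath {V : Type} (H : V → V → Type) : V → V → Type where
  | nil : (a : V) → QPath H a a
  | cons : {a b c : V} → QPath H a b → H b c → QPath H a c

def QPath.length {V : Type} {H : V → V → Type} : {a b : V} → QPath H a b → ℕ
  | _, _, .nil _ => 0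
  | _, _, .cons p _ => QPath.length p + 1

/-- `Q` has no loops and no (nontrivial, directed) cycles. -/
def QuiverAcyclic {V : Type} (H : V → V → Type) : Prop :=
  ∀ (a : V) (p : QPath H a a), QPath.length p = 0

/-- `Q` is connected (any two vertices are joined by a walk in `Q̃`). -/
def QuiverConnected {V : Type} (H : V → V → Type) : Prop :=
  ∀ a b : V, Nonempty (DWalk H a b)

/-- Condition (b): for every vertex `x`, `#s(x) + #t(x) > 1`. -/
def CondB {V : Type} (H : V → V → Type) [Fintype V] [∀ a b, Fintype (H a b)] : Prop :=
  ∀ x : V, 1 < ∑ y : V, (Fintype.card (H x y) + Fintype.card (H y x))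

/-- `s` is the unique source (vertex with no incoming arrows) of `Q`. -/
def UniqueSource {V : Type} (H : V → V → Type) (s : V) : Prop :=
  (∀ y : V, IsEmpty (H y s)) ∧ ∀ t : V, (∀ y : V, IsEmpty (H y t)) → t = s

/-- The set `L(Q) = {(r_i) ∈ ℤ_{≥0}^{Q₀} ∣ r_j ≤ r_i + l_Q(i,j) for all i,j}`. -/
def LSet {V : Type} (H : V → V → Type) : Set (V → ℕ) :=
  {r | ∀ i j : V, r j ≤ r i + ell H i j}



lemma d_aux1 {n : ℕ} (c1 c2 : Fin n → ℕ) (f g : Fin n → ℤ) (B A : ℤ) (hB : 0 ≤ B)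
    (hf : ∀ z, 0 < c1 z → B ≤ f z) (hg : ∀ z, 0 < c2 z → B ≤ g z)
    (htot : 1 < ∑ z, (c1 z + c2 z))
    (hA : ∃ z, 0 < c1 z ∧ A = f z) :
    A + B ≤ (∑ z, (c1 z : ℤ) * f z) + ∑ z, (c2 z : ℤ) * g z := by
  obtain ⟨z0, hc, hAf⟩ := hA
  have hBA : B ≤ A := hAf ▸ hf z0 hc
  have hF : ∀ z ∈ Finset.univ, (0:ℤ) ≤ (c1 z : ℤ) * (f z - B) + (c2 z : ℤ) * (g z - B) := by
    intro z _
    have t1 : (0:ℤ) ≤ (c1 z : ℤ) * (f z - B) := by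
      rcases Nat.eq_zero_or_pos (c1 z) with h | h
      · simp [h]
      · exact mul_nonneg (by positivity) (by linarith [hf z h])
    have t2 : (0:ℤ) ≤ (c2 z : ℤ) * (g z - B) := by
      rcases Nat.eq_zero_or_pos (c2 z) with h | h
      · simp [h]
      · exact mul_nonneg (by positivity) (by linarith [hg z h])
    linarith
  have hz0 : A - B ≤ (c1 z0 : ℤ) * (f z0 - B) + (c2 z0 : ℤ) * (g z0 - B) := by
    have h1' : (1:ℤ) ≤ (c1 z0 : ℤ) := by exact_mod_cast hc
    have t2 : (0:ℤ) ≤ (c2 z0 : ℤ) * (g z0 - B) := by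
      rcases Nat.eq_zero_or_pos (c2 z0) with h | h
      · simp [h]
      · exact mul_nonneg (by positivity) (by linarith [hg z0 h])
    have := mul_le_mul_of_nonneg_right h1' (sub_nonneg.mpr hBA)
    rw [one_mul] at this
    rw [hAf] at this
    linarith
  have hsum : A - B ≤ ∑ z, ((c1 z : ℤ) * (f z - B) + (c2 z : ℤ) * (g z - B)) :=
    le_trans hz0 (Finset.single_le_sum hF (Finset.mem_univ z0))
  have hexp : ∑ z, ((c1 z : ℤ) * (f z - B) + (c2 z : ℤ) * (g z - B)) =
      ((∑ z, (c1 z : ℤ) * f z) + ∑ z, (c2 z : ℤ) * g z)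
        - (∑ z, ((c1 z : ℤ) + (c2 z : ℤ))) * B := by
    rw [Finset.sum_mul, ← Finset.sum_add_distrib, ← Finset.sum_sub_distrib]
    apply Finset.sum_congr rfl
    intro z _
    ring
  have hT : (2:ℤ) ≤ ∑ z, ((c1 z : ℤ) + (c2 z : ℤ)) := by
    have h2 : (2:ℕ) ≤ ∑ z, (c1 z + c2 z) := htot
    have : ((∑ z, (c1 z + c2 z) : ℕ) : ℤ) = ∑ z, ((c1 z : ℤ) + (c2 z : ℤ)) := by
      push_cast
      rfl
    rw [← this]
    exact_mod_cast h2
  have hTB : 2 * B ≤ (∑ z, ((c1 z : ℤ) + (c2 z : ℤ))) * B := mul_le_mul_of_nonneg_right hT hB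
  rw [hexp] at hsum
  linarith

lemma d_aux {n : ℕ} (c1 c2 : Fin n → ℕ) (f g : Fin n → ℤ) (B A : ℤ) (hB : 0 ≤ B)
    (hf : ∀ z, 0 < c1 z → B ≤ f z) (hg : ∀ z, 0 < c2 z → B ≤ g z)
    (htot : 1 < ∑ z, (c1 z + c2 z))
    (hA : (∃ z, 0 < c1 z ∧ A = f z) ∨ ∃ z, 0 < c2 z ∧ A = g z) :
    A + B ≤ (∑ z, (c1 z : ℤ) * f z) + ∑ z, (c2 z : ℤ) * g z := by
  rcases hA with h | h
  · exact d_aux1 c1 c2 f g B A hB hf hg htot h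
  · have htot' : 1 < ∑ z, (c2 z + c1 z) := by
      rwa [Finset.sum_congr rfl (fun z _ => Nat.add_comm (c2 z) (c1 z))]
    have := d_aux1 c2 c1 g f B A hB hg hf htot' h
    linarith


theorem d_recursion_nonneg' {n : ℕ} (hn : 0 < n)
    (H : Fin n → Fin n → Type) [∀ a b, Fintype (H a b)]
    (hdir : ∀ (a b : Fin n), H a b → (b : ℕ) < (a : ℕ))
    (hb : ∀ x : Fin n, 1 < ∑ y : Fin n, (Fintype.card (H x y) + Fintype.card (H y x)))
    (a : Fin n) (d : ℕ → ℤ)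
    (h0 : ∀ (x : Fin n) (r : ℕ), (x : ℕ) + r * n < (a : ℕ) + n →
      d ((x : ℕ) + r * n) = 0)
    (h1 : d ((a : ℕ) + n) = 1)
    (h2 : ∀ (x : Fin n) (r : ℕ), (a : ℕ) + n < (x : ℕ) + (r + 1) * n →
      d ((x : ℕ) + (r + 1) * n) =
        (∑ y : Fin n, (Fintype.card (H x y) : ℤ) * d ((y : ℕ) + (r + 1) * n)) +
        (∑ y : Fin n, (Fintype.card (H y x) : ℤ) * d ((y : ℕ) + r * n)) -
        d ((x : ℕ) + r * n)) :
    ∀ m : ℕ, 0 ≤ d m := by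
  have hdz : ∀ k : ℕ, k < (a : ℕ) + n → d k = 0 := by
    intro k hk
    have hx : ((⟨k % n, Nat.mod_lt _ hn⟩ : Fin n) : ℕ) = k % n := rfl
    have hk' : k % n + k / n * n = k := Nat.mod_add_div' k n
    have := h0 ⟨k % n, Nat.mod_lt _ hn⟩ (k / n) (by rw [hx, hk']; exact hk)
    rwa [hx, hk'] at this
  have key : ∀ m : ℕ, 0 ≤ d m ∧ (∀ (x : Fin n) (r : ℕ), (x : ℕ) + (r + 1) * n = m →
      (a : ℕ) + n < m →
      (∀ z : Fin n, 0 < Fintype.card (H x z) →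
        d ((x : ℕ) + r * n) ≤ d ((z : ℕ) + (r + 1) * n)) ∧
      (∀ z : Fin n, 0 < Fintype.card (H z x) →
        d ((x : ℕ) + r * n) ≤ d ((z : ℕ) + r * n))) := by
    intro m
    induction m using Nat.strong_induction_on with
    | _ m IH =>
    rcases lt_trichotomy m ((a : ℕ) + n) with hm | hm | hm
    · exact ⟨by rw [hdz m hm], fun x r _ h => absurd h (by omega)⟩
    · exact ⟨by rw [hm, h1]; norm_num, fun x r _ h => absurd h (by omega)⟩
    · have hstar : ∀ (x : Fin n) (r : ℕ), (x : ℕ) + (r + 1) * n = m →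
          (a : ℕ) + n < m →
          (∀ z : Fin n, 0 < Fintype.card (H x z) →
            d ((x : ℕ) + r * n) ≤ d ((z : ℕ) + (r + 1) * n)) ∧
          (∀ z : Fin n, 0 < Fintype.card (H z x) →
            d ((x : ℕ) + r * n) ≤ d ((z : ℕ) + r * n)) := by
        intro x r hxr hlt
        have e : (r + 1) * n = r * n + n := by ring
        have hxn : (x : ℕ) < n := x.isLt
        constructor
        · -- forward neighbors: arrows x → z, z < x
          intro z hz
          have hzx : (z : ℕ) < (x : ℕ) := hdir x z (Classical.choice (Fintype.card_pos_iff.mp hz))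
          have hpm : (z : ℕ) + (r + 1) * n < m := by omega
          rcases lt_trichotomy ((z : ℕ) + (r + 1) * n) ((a : ℕ) + n) with hpa | hpa | hpa
          · rw [hdz _ hpa, hdz ((x : ℕ) + r * n) (by omega)]
          · rw [hpa, h1, hdz ((x : ℕ) + r * n) (by omega)]
            norm_num
          · have hrec := h2 z r hpa
            obtain ⟨hK1, hK2⟩ := (IH _ hpm).2 z r rfl hpa
            have hB : 0 ≤ d ((z : ℕ) + r * n) := (IH ((z : ℕ) + r * n) (by omega)).1
            have hsum : d ((x : ℕ) + r * n) + d ((z : ℕ) + r * n) ≤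
                (∑ y : Fin n, (Fintype.card (H z y) : ℤ) * d ((y : ℕ) + (r + 1) * n)) +
                ∑ y : Fin n, (Fintype.card (H y z) : ℤ) * d ((y : ℕ) + r * n) :=
              d_aux _ _ _ _ _ _ hB hK1 hK2 (hb z) (Or.inr ⟨x, hz, rfl⟩)
            linarith
        · -- backward neighbors: arrows z → x, x < z
          intro z hz
          have hxz : (x : ℕ) < (z : ℕ) := hdir z x (Classical.choice (Fintype.card_pos_iff.mp hz))
          have hzn : (z : ℕ) < n := z.isLt
          have hpm : (z : ℕ) + r * n < m := by omega
          rcases lt_trichotomy ((z : ℕ) + r * n) ((a : ℕ) + n) with hpa | hpa | hpa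
          · rw [hdz _ hpa, hdz ((x : ℕ) + r * n) (by omega)]
          · rw [hpa, h1, hdz ((x : ℕ) + r * n) (by omega)]
            norm_num
          · obtain _ | r' := r
            · simp only [Nat.zero_mul, Nat.add_zero] at hpa
              omega
            · have e' : (r' + 1) * n = r' * n + n := by ring
              have hrec := h2 z r' hpa
              obtain ⟨hK1, hK2⟩ := (IH _ hpm).2 z r' rfl hpa
              have hB : 0 ≤ d ((z : ℕ) + r' * n) := (IH ((z : ℕ) + r' * n) (by omega)).1
              have hsum : d ((x : ℕ) + (r' + 1) * n) + d ((z : ℕ) + r' * n) ≤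
                  (∑ y : Fin n, (Fintype.card (H z y) : ℤ) * d ((y : ℕ) + (r' + 1) * n)) +
                  ∑ y : Fin n, (Fintype.card (H y z) : ℤ) * d ((y : ℕ) + r' * n) :=
                d_aux _ _ _ _ _ _ hB hK1 hK2 (hb z) (Or.inl ⟨x, hz, rfl⟩)
              linarith
      refine ⟨?_, hstar⟩
      -- nonnegativity of d m using the mesh at m
      have hx : ((⟨m % n, Nat.mod_lt _ hn⟩ : Fin n) : ℕ) = m % n := rfl
      set x : Fin n := ⟨m % n, Nat.mod_lt _ hn⟩ with hxdef
      have hq : 1 ≤ m / n := Nat.one_le_div_iff hn |>.mpr (by omega)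
      have hxr : (x : ℕ) + (m / n - 1 + 1) * n = m := by
        rw [hx, show m / n - 1 + 1 = m / n from by omega]
        exact Nat.mod_add_div' m n
      set r : ℕ := m / n - 1 with hrdef
      have e : (r + 1) * n = r * n + n := by ring
      obtain ⟨hK1, hK2⟩ := hstar x r hxr hm
      have hB : 0 ≤ d ((x : ℕ) + r * n) := (IH ((x : ℕ) + r * n) (by omega)).1
      have hrec := h2 x r (by rw [hxr]; exact hm)
      have hex : ∃ z : Fin n, 0 < Fintype.card (H x z) ∨ 0 < Fintype.card (H z x) := by
        by_contra hcon
        push_neg at hcon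
        have hzero : ∀ z : Fin n, Fintype.card (H x z) + Fintype.card (H z x) = 0 := by
          intro z
          have := hcon z
          omega
        have := hb x
        rw [Finset.sum_eq_zero (fun z _ => hzero z)] at this
        omega
      obtain ⟨z0, hz0⟩ := hex
      rw [← hxr]
      rcases hz0 with h | h
      · have hsum : d ((z0 : ℕ) + (r + 1) * n) + d ((x : ℕ) + r * n) ≤
            (∑ y : Fin n, (Fintype.card (H x y) : ℤ) * d ((y : ℕ) + (r + 1) * n)) +
            ∑ y : Fin n, (Fintype.card (H y x) : ℤ) * d ((y : ℕ) + r * n) :=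
          d_aux _ _ _ _ _ _ hB hK1 hK2 (hb x) (Or.inl ⟨z0, h, rfl⟩)
        have := hK1 z0 h
        linarith
      · have hsum : d ((z0 : ℕ) + r * n) + d ((x : ℕ) + r * n) ≤
            (∑ y : Fin n, (Fintype.card (H x y) : ℤ) * d ((y : ℕ) + (r + 1) * n)) +
            ∑ y : Fin n, (Fintype.card (H y x) : ℤ) * d ((y : ℕ) + r * n) :=
          d_aux _ _ _ _ _ _ hB hK1 hK2 (hb x) (Or.inr ⟨z0, h, rfl⟩)
        have := hK2 z0 h
        linarith
  exact fun m => (key m).1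

/-- Let `Q` be a finite connected acyclic quiver with vertex
set `{0, …, n-1}` (arrows going from larger to smaller indices) satisfying
condition (b).  Writing `m = x + r·n` (so that `m` encodes the module
`τ^{-r} P(x)`), the sequence `d_a` determined by the recursion
`d_a(x + rn) = 0` for `x + rn < a + n`, `d_a(a + n) = 1`, and
`d_a(x + rn) = Σ_{α : x → t(α)} d_a(t(α) + rn) + Σ_{β : s(β) → x} d_a(s(β) + (r-1)n) − d_a(x + (r-1)n)`
for `x + rn > a + n`, takes only non-negative values. -/
theorem d_recursion_nonneg {n : ℕ} (hn : 0 < n)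
    (H : Fin n → Fin n → Type) [∀ a b, Fintype (H a b)]
    (hdir : ∀ (a b : Fin n), H a b → (b : ℕ) < (a : ℕ))
    (hb : CondB H)
    (a : Fin n) (d : ℕ → ℤ)
    (h0 : ∀ (x : Fin n) (r : ℕ), (x : ℕ) + r * n < (a : ℕ) + n →
      d ((x : ℕ) + r * n) = 0)
    (h1 : d ((a : ℕ) + n) = 1)
    (h2 : ∀ (x : Fin n) (r : ℕ), (a : ℕ) + n < (x : ℕ) + (r + 1) * n →
      d ((x : ℕ) + (r + 1) * n) =
        (∑ y : Fin n, (Fintype.card (H x y) : ℤ) * d ((y : ℕ) + (r + 1) * n)) +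
        (∑ y : Fin n, (Fintype.card (H y x) : ℤ) * d ((y : ℕ) + r * n)) -
        d ((x : ℕ) + r * n)) :
    ∀ m : ℕ, 0 ≤ d m :=
  d_recursion_nonneg' hn H hdir hb a d h0 h1 h2
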